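/- For every ε > 0 there exist a₀ > 0 and N₀ ∈ ℕ such that for all N ≥ N₀ the following holds: if p : ℤ → ℝ satisfies p(0) = 0, p(N) = 1 and the first-step equations p(x) = q₁(x) p(x+1) + q₋₁(x) p(x−1) + q₋₂(x) p(x−2) + (1 − q₁(x) − q₋₁(x) − q₋₂(x)) p(x) for all 0 < x < N, then p(x) ≥ 1 − exp(−a₀ ε N) for every integer x with (c₊ + 2ε)N < x < N. In words, under the majority rule with group size 4, the probability p_x(N,4) that opinion +1 wins starting from more than (c₊ + 2ε)N supporters is at least 1 − exp(−a₀ ε N). -/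

import Mathlib

/-- `q₁(x) = C(x,3)·(N−x)/C(N,4)` for an integer state `x`, probability of a
`+1` jump in the size-4 public debate model with population `N`. -/
noncomputable def q1z (N : ℕ) (x : ℤ) : ℝ :=
  (x.toNat.choose 3 : ℝ) * ((((N : ℤ) - x).toNat : ℕ) : ℝ) / (N.choose 4 : ℝ)

/-- `q₋₁(x) = x·C(N−x,3)/C(N,4)` for an integer state `x`. -/
noncomputable def qm1z (N : ℕ) (x : ℤ) : ℝ :=
  (x.toNat : ℝ) * ((((N : ℤ) - x).toNat).choose 3 : ℝ) / (N.choose 4 : ℝ)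

/-- `q₋₂(x) = C(x,2)·C(N−x,2)/C(N,4)` for an integer state `x`. -/
noncomputable def qm2z (N : ℕ) (x : ℤ) : ℝ :=
  (x.toNat.choose 2 : ℝ) * ((((N : ℤ) - x).toNat).choose 2 : ℝ) / (N.choose 4 : ℝ)

/-- Lower bound on the winning probability of opinion `+1` under the majority
rule with group size 4: if the initial number of supporters is above
`(c₊ + 2ε)N` with `c₊ = (1+√13)/6`, then `p_x(N,4) ≥ 1 − exp(−a₀ ε N)` for
all large `N`. -/

lemma cast_choose_two' (n : ℕ) : (n.choose 2 : ℝ) = n * (n - 1) / 2 := by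
  induction n with
  | zero => simp
  | succ k ih =>
    rw [Nat.choose_succ_succ, Nat.choose_one_right]
    push_cast [ih]; ring

lemma cast_choose_three' (n : ℕ) : (n.choose 3 : ℝ) = n * (n - 1) * (n - 2) / 6 := by
  induction n with
  | zero => simp
  | succ k ih =>
    rw [Nat.choose_succ_succ]
    push_cast [ih, cast_choose_two']; ring

lemma q1z_nonneg (N : ℕ) (x : ℤ) : 0 ≤ q1z N x := by unfold q1z; positivity
lemma qm1z_nonneg (N : ℕ) (x : ℤ) : 0 ≤ qm1z N x := by unfold qm1z; positivity
lemma qm2z_nonneg (N : ℕ) (x : ℤ) : 0 ≤ qm2z N x := by unfold qm2z; positivity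

lemma q1z_pos (N : ℕ) (x : ℤ) (hN : 4 ≤ N) (h3 : 3 ≤ x) (hx : x ≤ (N:ℤ) - 1) :
    0 < q1z N x := by
  unfold q1z
  have h1 : 0 < x.toNat.choose 3 := Nat.choose_pos (by omega)
  have h2 : 0 < ((N:ℤ) - x).toNat := by omega
  have h4 : 0 < N.choose 4 := Nat.choose_pos hN
  apply div_pos
  · apply mul_pos
    · exact_mod_cast h1
    · exact_mod_cast h2
  · exact_mod_cast h4

lemma qm1z_pos (N : ℕ) (x : ℤ) (hN : 4 ≤ N) (h1 : 1 ≤ x) (hx : x ≤ (N:ℤ) - 3) :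
    0 < qm1z N x := by
  unfold qm1z
  have h2 : 0 < x.toNat := by omega
  have h3 : 0 < (((N:ℤ) - x).toNat).choose 3 := Nat.choose_pos (by omega)
  have h4 : 0 < N.choose 4 := Nat.choose_pos hN
  apply div_pos
  · apply mul_pos
    · exact_mod_cast h2
    · exact_mod_cast h3
  · exact_mod_cast h4

lemma q1z_one (N : ℕ) : q1z N 1 = 0 := by
  unfold q1z
  norm_num [show ((1:ℤ).toNat) = 1 from rfl, show Nat.choose 1 3 = 0 from rfl]
lemma q1z_two (N : ℕ) : q1z N 2 = 0 := by
  unfold q1z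
  norm_num [show ((2:ℤ).toNat) = 2 from rfl, show Nat.choose 2 3 = 0 from rfl]
lemma qm2z_one (N : ℕ) : qm2z N 1 = 0 := by
  unfold qm2z
  norm_num [show ((1:ℤ).toNat) = 1 from rfl, show Nat.choose 1 2 = 0 from rfl]


-- scalar inequality at the density level
lemma scalar_ineq (a : ℝ) (h12 : 1/2 ≤ a) (ha1 : a ≤ 1) (hδ : 0 < 3*a^2 - a - 1) :
    (1-a)^2*(1+(3*a^2-a-1)/14) + (3/2)*a*(1-a)*(2+(3*a^2-a-1)/14)*(1+(3*a^2-a-1)/14)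
      + (3*a^2-a-1)/2 ≤ a^2 := by
  nlinarith [sq_nonneg (1-a), sq_nonneg a, mul_nonneg (sub_nonneg.2 ha1) (sub_nonneg.2 h12),
    sq_nonneg (3*a^2-a-1), mul_pos hδ hδ, sq_nonneg (a*(1-a))]

-- step1: the per-(X,Y) inequality
lemma step1 (a μ X Y NN : ℝ) (h12 : 1/2 ≤ a) (ha1 : a ≤ 1)
    (hX3 : 3 ≤ X) (hY1 : 1 ≤ Y) (hXY : X + Y = NN)
    (hXa : a * NN ≤ X)
    (hδ : 0 < 3*a^2 - a - 1)
    (hμ : μ = (3*a^2 - a - 1)/14)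
    (hN : 8 / (3*a^2 - a - 1) ≤ NN) :
    (Y-1)*(Y-2)*(1+μ) + (3/2)*(X-1)*(Y-1)*(2+μ)*(1+μ) ≤ (X-1)*(X-2) := by
  set δ := 3*a^2 - a - 1 with hδdef
  have hδ1 : δ ≤ 1 := by
    have h := mul_nonneg (by linarith : (0:ℝ) ≤ 1 - a) (by linarith : (0:ℝ) ≤ 3*a + 2)
    have he : (1-a)*(3*a+2) = 1 - δ + 0*a := by rw [hδdef]; ring
    linarith
  have hμ0 : 0 ≤ μ := by rw [hμ]; positivity
  have hμ1 : μ ≤ 1 := by rw [hμ]; linarith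
  have hNN0 : (0:ℝ) < NN := by linarith
  have h8 : 8 ≤ NN * δ := by
    have := (div_le_iff₀ hδ).mp hN; linarith
  have hNN8 : 8 ≤ NN := by
    have h := mul_nonneg hNN0.le (by linarith : (0:ℝ) ≤ 1 - δ)
    have he : NN*(1-δ) = NN - NN*δ := by ring
    linarith
  have hY0 : (0:ℝ) ≤ Y := by linarith
  have hYB : Y ≤ (1-a)*NN := by
    have he : (1-a)*NN = NN - a*NN := by ring
    linarith
  have hXYC : X*Y ≤ a*(1-a)*NN^2 := by
    have hge : (1-a)*NN ≤ a*NN := by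
      have h := mul_nonneg (by linarith : (0:ℝ) ≤ 2*a-1) hNN0.le
      have he : (2*a-1)*NN = a*NN - (1-a)*NN := by ring
      linarith
    have h1 : 0 ≤ (X - a*NN)*(X - (1-a)*NN) :=
      mul_nonneg (by linarith) (by linarith)
    have he1 : (X - a*NN)*(X - (1-a)*NN) = X^2 - X*NN + a*(1-a)*NN^2 := by ring
    have he2 : X*Y = X*NN - X^2 := by rw [← hXY]; ring
    linarith
  have hY2 : Y^2 ≤ (1-a)^2*NN^2 := by
    have h := mul_self_le_mul_self hY0 hYB
    have e1 : Y*Y = Y^2 := by ring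
    have e2 : ((1-a)*NN)*((1-a)*NN) = (1-a)^2*NN^2 := by ring
    linarith
  have haNN2 : (2:ℝ) ≤ a*NN := by
    have h := mul_le_mul_of_nonneg_right h12 hNN0.le
    linarith
  have hXlow : a^2*NN^2 - 4*NN ≤ (X-1)*(X-2) := by
    have h1 := mul_self_le_mul_self (by linarith : (0:ℝ) ≤ a*NN - 2)
      (by linarith : a*NN - 2 ≤ X - 2)
    have e1 : (a*NN-2)*(a*NN-2) = a^2*NN^2 - 4*(a*NN) + 4 := by ring
    have e2 : (X-2)*(X-2) = (X-1)*(X-2) - (X-2) := by ring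
    have h2 : a*NN ≤ NN := by
      have := mul_le_mul_of_nonneg_right ha1 hNN0.le; linarith
    linarith
  have h4N : 4*NN ≤ (δ/2)*NN^2 := by
    have h := mul_le_mul_of_nonneg_left h8 (by linarith : (0:ℝ) ≤ NN/2)
    have he : (NN/2)*(NN*δ) = (δ/2)*NN^2 := by ring
    linarith
  -- upper bound for LHS
  have p1 : (Y-1)*(Y-2)*(1+μ) ≤ (1-a)^2*NN^2*(1+μ) := by
    have h : (Y-1)*(Y-2) ≤ (1-a)^2*NN^2 := by
      have e : (Y-1)*(Y-2) = Y^2 - 3*Y + 2 := by ring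
      linarith
    exact mul_le_mul_of_nonneg_right h (by linarith)
  have p2 : (3/2)*(X-1)*(Y-1)*(2+μ)*(1+μ) ≤ (3/2)*(a*(1-a)*NN^2)*(2+μ)*(1+μ) := by
    have hxy : (X-1)*(Y-1) ≤ a*(1-a)*NN^2 := by
      have e : (X-1)*(Y-1) = X*Y - X - Y + 1 := by ring
      linarith
    have h := mul_le_mul_of_nonneg_right hxy
      (by positivity : (0:ℝ) ≤ (3/2)*((2+μ)*(1+μ)))
    have e1 : (X-1)*(Y-1)*((3/2)*((2+μ)*(1+μ))) = (3/2)*(X-1)*(Y-1)*(2+μ)*(1+μ) := by ring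
    have e2 : (a*(1-a)*NN^2)*((3/2)*((2+μ)*(1+μ))) = (3/2)*(a*(1-a)*NN^2)*(2+μ)*(1+μ) := by
      ring
    linarith
  have hs := scalar_ineq a h12 ha1 hδ
  rw [← hδdef, ← hμ] at hs
  have hs2 := mul_le_mul_of_nonneg_right hs (by positivity : (0:ℝ) ≤ NN^2)
  have e2 : ((1-a)^2*(1+μ) + (3/2)*a*(1-a)*(2+μ)*(1+μ) + δ/2)*NN^2
      = (1-a)^2*NN^2*(1+μ) + (3/2)*(a*(1-a)*NN^2)*(2+μ)*(1+μ) + (δ/2)*NN^2 := by ring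
  linarith [hs2, p1, p2, hXlow, h4N, e2]

lemma harm_rearrange {N : ℕ} {p : ℤ → ℝ} {x : ℤ}
    (hp : p x = q1z N x * p (x + 1) + qm1z N x * p (x - 1) + qm2z N x * p (x - 2)
          + (1 - q1z N x - qm1z N x - qm2z N x) * p x) :
    q1z N x * (p (x+1) - p x) + qm1z N x * (p (x-1) - p x)
      + qm2z N x * (p (x-2) - p x) = 0 := by
  linear_combination -hp

lemma qsuper (N : ℕ) (x : ℤ) (a μ : ℝ) (hN4 : 4 ≤ N)
    (h3 : 3 ≤ x) (hxN : x ≤ (N:ℤ) - 1)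
    (h12 : 1/2 ≤ a) (ha1 : a ≤ 1) (hXa : a * N ≤ (x:ℝ))
    (hδ : 0 < 3*a^2 - a - 1) (hμ : μ = (3*a^2 - a - 1)/14)
    (hN8 : 8 / (3*a^2 - a - 1) ≤ (N:ℝ)) :
    qm1z N x * (1+μ) + qm2z N x * ((2+μ)*(1+μ)) ≤ q1z N x := by
  have hx0 : (0:ℤ) ≤ x := by omega
  have hy0 : (0:ℤ) ≤ (N:ℤ) - x := by omega
  set X : ℝ := (x.toNat : ℝ) with hXdef
  set Y : ℝ := (((N:ℤ) - x).toNat : ℝ) with hYdef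
  have hXx : X = (x:ℝ) := by
    rw [hXdef]; exact_mod_cast Int.toNat_of_nonneg hx0
  have hYy : Y = (N:ℝ) - (x:ℝ) := by
    rw [hYdef]
    have := Int.toNat_of_nonneg hy0
    have h2 : (((((N:ℤ) - x).toNat) : ℤ) : ℝ) = (((N:ℤ) - x : ℤ) : ℝ) := by rw [this]
    push_cast at h2 ⊢
    linarith
  have hX3 : 3 ≤ X := by rw [hXx]; exact_mod_cast h3
  have hY1 : 1 ≤ Y := by
    rw [hYy]
    have : x + 1 ≤ (N:ℤ) := by omega
    have : ((x:ℝ) + 1) ≤ (N:ℝ) := by exact_mod_cast this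
    linarith
  have hXY : X + Y = (N:ℝ) := by rw [hXx, hYy]; ring
  have hXa' : a * (N:ℝ) ≤ X := by rw [hXx]; exact hXa
  have hst := step1 a μ X Y (N:ℝ) h12 ha1 hX3 hY1 hXY hXa' hδ hμ hN8
  have hkey : X*(Y*(Y-1)*(Y-2)/6)*(1+μ) + (X*(X-1)/2)*(Y*(Y-1)/2)*((2+μ)*(1+μ))
      ≤ (X*(X-1)*(X-2)/6)*Y := by
    have h := mul_le_mul_of_nonneg_left hst
      (by positivity : (0:ℝ) ≤ X*Y/6)
    have e1 : X*Y/6*((Y-1)*(Y-2)*(1+μ) + (3/2)*(X-1)*(Y-1)*(2+μ)*(1+μ))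
        = X*(Y*(Y-1)*(Y-2)/6)*(1+μ) + (X*(X-1)/2)*(Y*(Y-1)/2)*((2+μ)*(1+μ)) := by ring
    have e2 : X*Y/6*((X-1)*(X-2)) = (X*(X-1)*(X-2)/6)*Y := by ring
    linarith
  have hD : (0:ℝ) < (N.choose 4 : ℝ) := by exact_mod_cast Nat.choose_pos hN4
  have hD' : (0:ℝ) ≤ 1/(N.choose 4 : ℝ) := by positivity
  calc qm1z N x * (1+μ) + qm2z N x * ((2+μ)*(1+μ))
      = (X*(Y*(Y-1)*(Y-2)/6)*(1+μ) + (X*(X-1)/2)*(Y*(Y-1)/2)*((2+μ)*(1+μ)))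
          * (1/(N.choose 4 : ℝ)) := by
        simp only [qm1z, qm2z, cast_choose_two', cast_choose_three', ← hXdef, ← hYdef]
        ring
    _ ≤ ((X*(X-1)*(X-2)/6)*Y) * (1/(N.choose 4 : ℝ)) :=
        mul_le_mul_of_nonneg_right hkey hD'
    _ = q1z N x := by
        simp only [q1z, cast_choose_three', ← hXdef, ← hYdef]
        ring

lemma p_nonneg (N : ℕ) (hN5 : 5 ≤ N) (p : ℤ → ℝ) (hp0 : p 0 = 0) (hpN : p (N:ℤ) = 1)
    (hh : ∀ x : ℤ, 0 < x → x < (N:ℤ) →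
      p x = q1z N x * p (x + 1) + qm1z N x * p (x - 1) + qm2z N x * p (x - 2)
        + (1 - q1z N x - qm1z N x - qm2z N x) * p x) :
    ∀ x : ℤ, 0 ≤ x → x ≤ (N:ℤ) → 0 ≤ p x := by
  classical
  set S : Finset ℤ := Finset.Icc (0:ℤ) (N:ℤ) with hSdef
  have hS : S.Nonempty := ⟨0, by simp [hSdef]⟩
  set M : ℝ := S.inf' hS p with hMdef
  have hMle : ∀ y : ℤ, 0 ≤ y → y ≤ (N:ℤ) → M ≤ p y := by
    intro y h1 h2
    exact Finset.inf'_le p (by simp [hSdef]; omega)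
  suffices hM : 0 ≤ M by
    intro x h1 h2; exact le_trans hM (hMle x h1 h2)
  set T : Finset ℤ := S.filter (fun y => p y = M) with hTdef
  have hT : T.Nonempty := by
    obtain ⟨z, hz, hzeq⟩ := Finset.exists_mem_eq_inf' hS p
    exact ⟨z, by simp [hTdef]; exact ⟨by simpa [hSdef] using hz, hzeq.symm⟩⟩
  set x₁ : ℤ := T.max' hT with hx₁def
  have hx₁T : x₁ ∈ T := T.max'_mem hT
  have hx₁S : x₁ ∈ S := (Finset.mem_filter.mp hx₁T).1
  have hx₁M : p x₁ = M := (Finset.mem_filter.mp hx₁T).2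
  have hx₁max : ∀ y ∈ T, y ≤ x₁ := fun y hy => T.le_max' y hy
  have hx₁rng : 0 ≤ x₁ ∧ x₁ ≤ (N:ℤ) := by simpa [hSdef] using hx₁S
  -- helper: a point attaining the minimum belongs to T
  have hmemT : ∀ y : ℤ, 0 ≤ y → y ≤ (N:ℤ) → p y = M → y ∈ T := by
    intro y h1 h2 h3
    simp [hTdef, hSdef]; exact ⟨⟨h1, h2⟩, h3⟩
  rcases eq_or_lt_of_le hx₁rng.1 with h0 | h0
  · rw [← hx₁M, ← h0, hp0]
  · rcases eq_or_lt_of_le hx₁rng.2 with hNe | hNl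
    · rw [← hx₁M, hNe, hpN]; norm_num
    · -- interior case
      have E := harm_rearrange (hh x₁ h0 hNl)
      have hq1n := q1z_nonneg N x₁
      have hqm1n := qm1z_nonneg N x₁
      have hqm2n := qm2z_nonneg N x₁
      have hN4 : 4 ≤ N := by omega
      have hp1 : M ≤ p (x₁+1) := hMle _ (by omega) (by omega)
      have hpm1 : M ≤ p (x₁-1) := hMle _ (by omega) (by omega)
      have hd1 : 0 ≤ q1z N x₁ * (p (x₁+1) - p x₁) :=
        mul_nonneg hq1n (by rw [hx₁M]; linarith)
      have hdm1 : 0 ≤ qm1z N x₁ * (p (x₁-1) - p x₁) :=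
        mul_nonneg hqm1n (by rw [hx₁M]; linarith)
      have hdm2 : 0 ≤ qm2z N x₁ * (p (x₁-2) - p x₁) := by
        rcases eq_or_lt_of_le (show (1:ℤ) ≤ x₁ by omega) with h1 | h1
        · have hx1 : x₁ = 1 := by omega
          rw [hx1, qm2z_one]; simp
        · have hpm2 : M ≤ p (x₁-2) := hMle _ (by omega) (by omega)
          exact mul_nonneg hqm2n (by rw [hx₁M]; linarith)
      rcases lt_or_ge x₁ 3 with hx3 | hx3
      · -- x₁ = 1 or x₁ = 2
        have hx12 : x₁ = 1 ∨ x₁ = 2 := by omega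
        have hqm1p1 : 0 < qm1z N 1 := qm1z_pos N 1 hN4 (le_refl 1) (by omega)
        have E1 := harm_rearrange (hh 1 one_pos (by omega))
        rw [q1z_one, qm2z_one] at E1
        have hp1eq0 : p 1 = 0 := by
          have h11 : qm1z N 1 * (p (1-1) - p 1) = 0 := by linarith
          rcases mul_eq_zero.mp h11 with h | h
          · exact absurd h (ne_of_gt hqm1p1)
          · have h2 : p (1-1) = p 1 := by linarith
            norm_num at h2; rw [← h2, hp0]
        rcases hx12 with h1 | h2
        · rw [← hx₁M, h1, hp1eq0]
        · have hq1z := q1z_two N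
          have hqm1p : 0 < qm1z N 2 := qm1z_pos N 2 hN4 (by norm_num) (by omega)
          rw [h2] at E hdm1 hdm2 hx₁M
          rw [hq1z] at E
          have h21 : qm1z N 2 * (p (2-1) - p 2) = 0 := by linarith
          have hp1M : p (2-1) = p 2 := by
            rcases mul_eq_zero.mp h21 with h | h
            · exact absurd h (ne_of_gt hqm1p)
            · linarith
          norm_num at hp1M
          rw [← hx₁M, ← hp1M, hp1eq0]
      · -- x₁ ≥ 3 : push the minimizer right, contradiction with maximality
        exfalso
        have hq1p : 0 < q1z N x₁ := q1z_pos N x₁ hN4 hx3 (by omega)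
        have h1z : q1z N x₁ * (p (x₁+1) - p x₁) = 0 := by linarith
        have : p (x₁+1) = M := by
          rcases mul_eq_zero.mp h1z with h | h
          · exact absurd h (ne_of_gt hq1p)
          · rw [← hx₁M]; linarith
        have := hx₁max (x₁+1) (hmemT (x₁+1) (by omega) (by omega) this)
        omega

theorem debate_majority_four_lower (ε : ℝ) (hε : 0 < ε) :
    ∃ a₀ > 0, ∃ N₀ : ℕ, ∀ N ≥ N₀, ∀ p : ℤ → ℝ,
      p 0 = 0 → p N = 1 →
      (∀ x : ℤ, 0 < x → x < N →
        p x = q1z N x * p (x + 1) + qm1z N x * p (x - 1) + qm2z N x * p (x - 2)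
          + (1 - q1z N x - qm1z N x - qm2z N x) * p x) →
      ∀ x : ℤ, ((1 + Real.sqrt 13) / 6 + 2 * ε) * N < (x : ℝ) → x < N →
        1 - Real.exp (-(a₀ * ε * N)) ≤ p x := by
  classical
  have hsq : Real.sqrt 13 ^ 2 = 13 := Real.sq_sqrt (by norm_num)
  have hs0 : 0 ≤ Real.sqrt 13 := Real.sqrt_nonneg 13
  have hs3 : 3 ≤ Real.sqrt 13 := by nlinarith
  have hs4 : Real.sqrt 13 ≤ 4 := by nlinarith
  set c : ℝ := (1 + Real.sqrt 13) / 6 with hcdef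
  by_cases hbig : 1 ≤ c + 2*ε
  · refine ⟨1, one_pos, 0, ?_⟩
    intro N _ p _ _ _ x hx hxN
    exfalso
    have hx' : (x:ℝ) < (N:ℝ) := by exact_mod_cast hxN
    have hN0 : (0:ℝ) ≤ (N:ℝ) := Nat.cast_nonneg N
    have : (N:ℝ) ≤ (c + 2*ε)*N := by nlinarith
    linarith
  · push_neg at hbig
    have hc23 : (2:ℝ)/3 ≤ c := by rw [hcdef]; linarith
    set a : ℝ := c + ε with hadef
    have h12 : 1/2 ≤ a := by rw [hadef]; linarith
    have ha1 : a ≤ 1 := by rw [hadef]; linarith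
    have hc0 : 3*c^2 - c - 1 = 0 := by
      have h : 3*c^2 - c - 1 = (Real.sqrt 13^2 - 13)/12 := by rw [hcdef]; ring
      rw [h, hsq]; norm_num
    set δ : ℝ := 3*a^2 - a - 1 with hδdef
    have hδe : δ = (3*c^2 - c - 1) + ε*(6*c - 1) + 3*ε^2 := by rw [hδdef, hadef]; ring
    have h6c : 6*c - 1 = Real.sqrt 13 := by rw [hcdef]; ring
    have hδ3ε : 3*ε ≤ δ := by
      rw [hδe, hc0, h6c]
      nlinarith [sq_nonneg ε, mul_le_mul_of_nonneg_left hs3 hε.le]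
    have hδpos : 0 < δ := lt_of_lt_of_le (by linarith) hδ3ε
    set μ : ℝ := δ/14 with hμdef
    have hμpos : 0 < μ := by rw [hμdef]; positivity
    set β : ℝ := 1 + μ with hβdef
    have hβ1 : 1 < β := by rw [hβdef]; linarith
    have hβ0 : 0 < β := by linarith
    have hβne : β ≠ 0 := ne_of_gt hβ0
    have hlog : 0 < Real.log β := Real.log_pos hβ1
    clear_value c a δ μ β
    refine ⟨Real.log β / 2, by positivity, max 6 (Nat.ceil (max (8/δ) (2/ε))), ?_⟩
    intro N hN p hp0 hpN hharm x hxlow hxN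
    have hN6 : 6 ≤ N := le_trans (le_max_left _ _) hN
    have hN6' : (6:ℝ) ≤ (N:ℝ) := by exact_mod_cast hN6
    have hceil : (Nat.ceil (max (8/δ) (2/ε)) : ℝ) ≤ (N:ℝ) := by
      exact_mod_cast le_trans (le_max_right _ _) hN
    have hN8δ : 8/δ ≤ (N:ℝ) := le_trans (le_trans (le_max_left _ _) (Nat.le_ceil _)) hceil
    have hN2ε : 2/ε ≤ (N:ℝ) := le_trans (le_trans (le_max_right _ _) (Nat.le_ceil _)) hceil
    have hεN2 : 2 ≤ ε*(N:ℝ) := by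
      rw [div_le_iff₀ hε] at hN2ε; linarith
    have hN5 : 5 ≤ N := by omega
    have hN4 : 4 ≤ N := by omega
    have hxlow' : a*(N:ℝ) + ε*(N:ℝ) < (x:ℝ) := by
      have h : (c + 2*ε)*(N:ℝ) = a*(N:ℝ) + ε*(N:ℝ) := by rw [hadef]; ring
      rw [← h]; exact hxlow
    set m : ℤ := ⌈a * (N:ℝ)⌉ with hmdef
    have hm1 : a*(N:ℝ) ≤ (m:ℝ) := Int.le_ceil _
    have hm2 : (m:ℝ) < a*(N:ℝ) + 1 := Int.ceil_lt_add_one _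
    have hm3 : (3:ℤ) ≤ m := by
      have h : (3:ℝ) ≤ a*(N:ℝ) := by
        have h0 := mul_le_mul h12 hN6' (by norm_num) (by linarith : (0:ℝ) ≤ a)
        linarith
      have h2 : (3:ℝ) ≤ (m:ℝ) := le_trans h hm1
      exact_mod_cast h2
    have hmN : m ≤ (N:ℤ) := by
      have haN : a*(N:ℝ) ≤ (N:ℝ) := by
        have h0 := mul_le_mul_of_nonneg_right ha1 (Nat.cast_nonneg (α := ℝ) N)
        linarith
      have h2 : (m:ℝ) < (N:ℝ) + 1 := by linarith
      have h3 : m < (N:ℤ) + 1 := by exact_mod_cast h2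
      omega
    clear_value m
    have hmx : m < x := by
      have h : (m:ℝ) < (x:ℝ) := by linarith
      exact_mod_cast h
    set S : Finset ℤ := Finset.Icc (m-1) (N:ℤ) with hSdef
    have hS : S.Nonempty := ⟨(N:ℤ), by simp [hSdef]; omega⟩
    set u : ℤ → ℝ := fun y => (1 - p y) - β ^ (m - y) with hudef
    have hu3 : ∀ y : ℤ, u y = (1 - p y) - β ^ (m - y) := fun y => rfl
    set M : ℝ := S.sup' hS u with hMdef
    clear_value u
    have hMge : ∀ y : ℤ, m-1 ≤ y → y ≤ (N:ℤ) → u y ≤ M := fun y h1 h2 =>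
      Finset.le_sup' u (by simp [hSdef]; omega)
    have hpnn := p_nonneg N hN5 p hp0 hpN hharm
    have hM : M ≤ 0 := by
      set T : Finset ℤ := S.filter (fun y => u y = M) with hTdef
      have hT : T.Nonempty := by
        obtain ⟨z, hz, hzeq⟩ := Finset.exists_mem_eq_sup' hS u
        refine ⟨z, by simp [hTdef]; exact ⟨by simpa [hSdef] using hz, by rw [hMdef]; exact hzeq.symm⟩⟩
      set x₁ : ℤ := T.max' hT with hx₁def
      have hx₁T : x₁ ∈ T := T.max'_mem hT
      have hx₁S : x₁ ∈ S := (Finset.mem_filter.mp hx₁T).1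
      have hx₁M : u x₁ = M := (Finset.mem_filter.mp hx₁T).2
      have hx₁max : ∀ y ∈ T, y ≤ x₁ := fun y hy => T.le_max' y hy
      have hx₁rng : m-1 ≤ x₁ ∧ x₁ ≤ (N:ℤ) := by simpa [hSdef] using hx₁S
      clear_value x₁
      rw [← hx₁M]
      rcases le_or_gt x₁ m with hA | hC1
      · -- boundary below : x₁ ≤ m
        have hp₁ : 0 ≤ p x₁ := hpnn x₁ (by omega) (by omega)
        have hnn : (0:ℤ) ≤ m - x₁ := by omega
        have hg1 : (1:ℝ) ≤ β ^ (m - x₁) := by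
          have e : β ^ (m - x₁) = β ^ ((m - x₁).toNat) := by
            rw [← zpow_natCast, Int.toNat_of_nonneg hnn]
          rw [e]
          exact one_le_pow₀ (by linarith)
        rw [hu3]; linarith
      · rcases eq_or_lt_of_le hx₁rng.2 with hB | hC2
        · -- boundary above : x₁ = N
          rw [hu3, hB, hpN]
          have := zpow_pos hβ0 (m - (N:ℤ))
          linarith
        · -- interior : contradiction
          exfalso
          have E := harm_rearrange (hharm x₁ (by omega) hC2)
          have hmx₁ : (m:ℝ) ≤ (x₁:ℝ) := by exact_mod_cast hC1.le
          have hq := qsuper N x₁ a μ hN4 (by omega) (by omega) h12 ha1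
            (by linarith) (by rw [hδdef] at hδpos; exact hδpos)
            (by rw [hμdef, hδdef]) (by rw [hδdef] at hN8δ; exact hN8δ)
          have ep1 : β ^ (m - (x₁+1)) = β ^ (m - x₁) * β⁻¹ := by
            have h : m - (x₁+1) = (m - x₁) - 1 := by ring
            rw [h, zpow_sub_one₀ hβne]
          have em1 : β ^ (m - (x₁-1)) = β ^ (m - x₁) * β := by
            have h : m - (x₁-1) = (m - x₁) + 1 := by ring
            rw [h, zpow_add_one₀ hβne]
          have em2 : β ^ (m - (x₁-2)) = β ^ (m - x₁) * β^2 := by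
            have h : m - (x₁-2) = (m - x₁) + 2 := by ring
            rw [h, zpow_add₀ hβne]
            norm_cast
          have hbr : q1z N x₁ * (β⁻¹ - 1) + qm1z N x₁ * (β - 1)
              + qm2z N x₁ * (β^2 - 1) ≤ 0 := by
            have h2 := mul_le_mul_of_nonneg_left hq
              (le_of_lt (by positivity : (0:ℝ) < μ/β))
            have e1 : (μ/β)*(qm1z N x₁*(1+μ) + qm2z N x₁*((2+μ)*(1+μ)))
                = qm1z N x₁*(β-1) + qm2z N x₁*(β^2-1) := by
              rw [hβdef]; field_simp; ring
            have e2 : (μ/β)*(q1z N x₁) = q1z N x₁ * (1 - β⁻¹) := by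
              rw [hβdef]; field_simp; ring
            have e3 : q1z N x₁*(β⁻¹-1) = -(q1z N x₁*(1 - β⁻¹)) := by ring
            linarith
          have G0pos : (0:ℝ) < β ^ (m - x₁) := zpow_pos hβ0 _
          have hG : q1z N x₁ * (β^(m-(x₁+1)) - β^(m-x₁))
              + qm1z N x₁ * (β^(m-(x₁-1)) - β^(m-x₁))
              + qm2z N x₁ * (β^(m-(x₁-2)) - β^(m-x₁)) ≤ 0 := by
            rw [ep1, em1, em2]
            have h3 := mul_nonpos_of_nonneg_of_nonpos G0pos.le hbr
            have e4 : β^(m-x₁) * (q1z N x₁*(β⁻¹-1) + qm1z N x₁*(β-1)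
                + qm2z N x₁*(β^2-1))
                = q1z N x₁*(β^(m-x₁)*β⁻¹ - β^(m-x₁))
                + qm1z N x₁*(β^(m-x₁)*β - β^(m-x₁))
                + qm2z N x₁*(β^(m-x₁)*β^2 - β^(m-x₁)) := by ring
            linarith
          have hsum : 0 ≤ q1z N x₁ * (u (x₁+1) - u x₁)
              + qm1z N x₁ * (u (x₁-1) - u x₁) + qm2z N x₁ * (u (x₁-2) - u x₁) := by
            have e5 : q1z N x₁ * (u (x₁+1) - u x₁) + qm1z N x₁ * (u (x₁-1) - u x₁)
                + qm2z N x₁ * (u (x₁-2) - u x₁)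
                = -(q1z N x₁ * (p (x₁+1) - p x₁) + qm1z N x₁ * (p (x₁-1) - p x₁)
                  + qm2z N x₁ * (p (x₁-2) - p x₁))
                - (q1z N x₁ * (β^(m-(x₁+1)) - β^(m-x₁))
                  + qm1z N x₁ * (β^(m-(x₁-1)) - β^(m-x₁))
                  + qm2z N x₁ * (β^(m-(x₁-2)) - β^(m-x₁))) := by
              simp only [hu3]; ring
            rw [e5, E]; linarith
          have hu1 : u (x₁+1) ≤ M := hMge _ (by omega) (by omega)
          have hum1 : u (x₁-1) ≤ M := hMge _ (by omega) (by omega)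
          have hum2 : u (x₁-2) ≤ M := hMge _ (by omega) (by omega)
          have ht1 : qm1z N x₁ * (u (x₁-1) - u x₁) ≤ 0 :=
            mul_nonpos_of_nonneg_of_nonpos (qm1z_nonneg N x₁) (by rw [hx₁M]; linarith)
          have ht2 : qm2z N x₁ * (u (x₁-2) - u x₁) ≤ 0 :=
            mul_nonpos_of_nonneg_of_nonpos (qm2z_nonneg N x₁) (by rw [hx₁M]; linarith)
          have h1pos : 0 < q1z N x₁ := q1z_pos N x₁ hN4 (by omega) (by omega)
          have ht3 : 0 ≤ q1z N x₁ * (u (x₁+1) - u x₁) := by linarith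
          have hge : M ≤ u (x₁+1) := by
            have h := (mul_nonneg_iff_of_pos_left h1pos).mp ht3
            rw [hx₁M] at h; linarith
          have hmem : x₁ + 1 ∈ T := by
            simp only [hTdef, Finset.mem_filter, hSdef, Finset.mem_Icc]
            exact ⟨⟨by omega, by omega⟩, le_antisymm hu1 hge⟩
          have := hx₁max _ hmem
          omega
    -- conclusion
    have hxS : u x ≤ M := hMge x (by omega) (by omega)
    have hub : 1 - p x ≤ β ^ (m - x) := by
      have h := hu3 x ▸ hxS
      linarith [hM, h]
    have hexp : β ^ (m - x) ≤ Real.exp (-(Real.log β / 2 * ε * N)) := by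
      have hrw : β ^ (m - x) = Real.exp (Real.log β * ((m:ℝ) - (x:ℝ))) := by
        rw [← Real.rpow_intCast β (m - x), Real.rpow_def_of_pos hβ0]
        push_cast
        ring_nf
      rw [hrw, Real.exp_le_exp]
      have hkey : ε*(N:ℝ)/2 ≤ (x:ℝ) - (m:ℝ) := by linarith
      have h := mul_le_mul_of_nonneg_left hkey hlog.le
      have e : Real.log β * ((m:ℝ) - (x:ℝ)) = -(Real.log β * ((x:ℝ) - (m:ℝ))) := by ring
      have e2 : Real.log β * (ε*(N:ℝ)/2) = Real.log β/2 * ε * (N:ℝ) := by ring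
      linarith
    linarith [hub, hexp]
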